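/- Let Q ∈ ℝ^{n×n} be symmetric positive definite, A ∈ ℝ^{m×n}, b ∈ ℝᵐ, d ∈ ℝⁿ and τ > 0. Suppose y* ∈ ℝᵐ satisfies (A Q⁻¹ Aᵀ) y* = −(A Q⁻¹ d + b) and ‖y*‖₂ ≤ τ. Then y* maximizes y ↦ −(1/2)(d + Aᵀy)ᵀ Q⁻¹ (d + Aᵀy) − bᵀ y over {y ∈ ℝᵐ : ‖y‖₂ ≤ τ}, and consequently u* := Q⁻¹(d + Aᵀ y*) is the unique global minimizer of u ↦ (1/2) uᵀ Q u − dᵀ u + τ‖A u + b‖₂ over ℝⁿ. -/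

import Mathlib

open Matrix

/-- The Euclidean (`ℓ₂`) norm of a vector in `Fin k → ℝ`. -/
noncomputable def norm2 {k : ℕ} (v : Fin k → ℝ) : ℝ := Real.sqrt (∑ i, v i ^ 2)

/-- Primal objective `u ↦ (1/2)uᵀQu − dᵀu + τ‖Au + b‖₂`. -/
noncomputable def primalObj {m n : ℕ} (Q : Matrix (Fin n) (Fin n) ℝ)
    (A : Matrix (Fin m) (Fin n) ℝ) (b : Fin m → ℝ) (d : Fin n → ℝ) (τ : ℝ)
    (u : Fin n → ℝ) : ℝ :=
  1 / 2 * (u ⬝ᵥ Q.mulVec u) - d ⬝ᵥ u + τ * norm2 (A.mulVec u + b)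

/-- Dual objective `y ↦ −(1/2)(d + Aᵀy)ᵀ Q⁻¹ (d + Aᵀy) − bᵀy`. -/
noncomputable def dualObj {m n : ℕ} (Q : Matrix (Fin n) (Fin n) ℝ)
    (A : Matrix (Fin m) (Fin n) ℝ) (b : Fin m → ℝ) (d : Fin n → ℝ)
    (y : Fin m → ℝ) : ℝ :=
  -(1 / 2) * ((d + Aᵀ.mulVec y) ⬝ᵥ Q⁻¹.mulVec (d + Aᵀ.mulVec y)) - b ⬝ᵥ y

lemma norm2_nonneg {k : ℕ} (v : Fin k → ℝ) : 0 ≤ norm2 v := Real.sqrt_nonneg _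

lemma norm2_zero {k : ℕ} : norm2 (0 : Fin k → ℝ) = 0 := by simp [norm2]

lemma abs_dot_le_norm2 {k : ℕ} (v w : Fin k → ℝ) : |v ⬝ᵥ w| ≤ norm2 v * norm2 w := by
  rw [norm2, norm2, ← Real.sqrt_mul (by positivity), ← Real.sqrt_sq_eq_abs]
  apply Real.sqrt_le_sqrt
  simpa [dotProduct] using Finset.sum_mul_sq_le_sq_mul_sq Finset.univ v w

lemma dot_symm_aux {k : ℕ} {S : Matrix (Fin k) (Fin k) ℝ} (hS : Sᵀ = S)
    (a c : Fin k → ℝ) : a ⬝ᵥ S.mulVec c = (S.mulVec a) ⬝ᵥ c := by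
  rw [Matrix.dotProduct_mulVec]
  conv_lhs => rw [← hS]
  rw [Matrix.vecMul_transpose]

lemma quad_expand {k : ℕ} {S : Matrix (Fin k) (Fin k) ℝ} (hS : Sᵀ = S)
    (a c : Fin k → ℝ) :
    (a + c) ⬝ᵥ S.mulVec (a + c)
      = a ⬝ᵥ S.mulVec a + 2 * (a ⬝ᵥ S.mulVec c) + c ⬝ᵥ S.mulVec c := by
  have h1 : c ⬝ᵥ S.mulVec a = a ⬝ᵥ S.mulVec c := by
    rw [dot_symm_aux hS, dotProduct_comm]
  simp only [Matrix.mulVec_add, dotProduct_add, add_dotProduct]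
  linarith

/-- **Theorem `th::thProx-dual-p2`, interior (pseudo-inverse) case.**
If `(AQ⁻¹Aᵀ) y* = −(AQ⁻¹d + b)` and `‖y*‖₂ ≤ τ`, then `y*` maximizes the dual objective
over `{y : ‖y‖₂ ≤ τ}`, and `u* = Q⁻¹(d + Aᵀy*)` is the unique global minimizer of
`u ↦ (1/2)uᵀQu − dᵀu + τ‖Au + b‖₂`. -/
theorem stmt_13 {m n : ℕ} (Q : Matrix (Fin n) (Fin n) ℝ) (hQ : Q.PosDef)
    (A : Matrix (Fin m) (Fin n) ℝ) (b : Fin m → ℝ) (d : Fin n → ℝ)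
    (τ : ℝ) (hτ : 0 < τ)
    (ystar : Fin m → ℝ)
    (hlin : (A * Q⁻¹ * Aᵀ).mulVec ystar = -(A.mulVec (Q⁻¹.mulVec d) + b))
    (hfeas : norm2 ystar ≤ τ) :
    (∀ y : Fin m → ℝ, norm2 y ≤ τ → dualObj Q A b d y ≤ dualObj Q A b d ystar) ∧
    (∀ u : Fin n → ℝ, u ≠ Q⁻¹.mulVec (d + Aᵀ.mulVec ystar) →
      primalObj Q A b d τ (Q⁻¹.mulVec (d + Aᵀ.mulVec ystar)) < primalObj Q A b d τ u) := by
  have hQsym : Qᵀ = Q := by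
    ext i j
    have := congrFun (congrFun hQ.1 j) i
    simpa [Matrix.conjTranspose_apply] using this.symm
  have hS : (Q⁻¹).PosDef := hQ.inv
  have hSsym : (Q⁻¹)ᵀ = Q⁻¹ := by
    ext i j
    have := congrFun (congrFun hS.1 j) i
    simpa [Matrix.conjTranspose_apply] using this.symm
  set ustar : Fin n → ℝ := Q⁻¹.mulVec (d + Aᵀ.mulVec ystar) with hustar
  -- A u* + b = 0
  have hAu : A.mulVec ustar + b = 0 := by
    have h1 : A.mulVec (Q⁻¹.mulVec (Aᵀ.mulVec ystar)) = (A * Q⁻¹ * Aᵀ).mulVec ystar := by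
      simp [Matrix.mulVec_mulVec, Matrix.mul_assoc]
    rw [hustar, Matrix.mulVec_add, Matrix.mulVec_add, h1, hlin]
    abel
  have hAu' : A.mulVec ustar = -b := by
    have := hAu
    rw [add_eq_zero_iff_eq_neg] at this
    exact this
  constructor
  · -- dual part
    intro y _
    set z := y - ystar with hz
    have hy : y = ystar + z := by rw [hz]; abel
    set w : Fin n → ℝ := Aᵀ.mulVec z with hw
    have hkey : d + Aᵀ.mulVec y = (d + Aᵀ.mulVec ystar) + w := by
      rw [hy, hw, Matrix.mulVec_add]; abel
    have hvw : (d + Aᵀ.mulVec ystar) ⬝ᵥ Q⁻¹.mulVec w = -(b ⬝ᵥ z) := by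
      rw [dot_symm_aux hSsym, ← hustar, hw, Matrix.dotProduct_mulVec,
        Matrix.vecMul_transpose, hAu', neg_dotProduct]
    have hw0 : 0 ≤ w ⬝ᵥ Q⁻¹.mulVec w := by
      have := hS.posSemidef.dotProduct_mulVec_nonneg w
      simpa using this
    have hby : b ⬝ᵥ y = b ⬝ᵥ ystar + b ⬝ᵥ z := by
      rw [hy, dotProduct_add]
    unfold dualObj
    rw [hkey, quad_expand hSsym, hvw, hby]
    linarith
  · -- primal part
    intro u hu
    set h : Fin n → ℝ := u - ustar with hh
    have hu' : u = ustar + h := by rw [hh]; abel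
    have hne : h ≠ 0 := by
      intro h0
      apply hu
      rw [hu', h0, add_zero]
    have hdet : IsUnit Q.det := hQ.det_pos.ne'.isUnit
    have hQu : Q.mulVec ustar = d + Aᵀ.mulVec ystar := by
      rw [hustar, Matrix.mulVec_mulVec, Matrix.mul_nonsing_inv _ hdet, Matrix.one_mulVec]
    have hcross : ustar ⬝ᵥ Q.mulVec h = d ⬝ᵥ h + ystar ⬝ᵥ A.mulVec h := by
      rw [dot_symm_aux hQsym, hQu, add_dotProduct]
      congr 1
      rw [dotProduct_comm, Matrix.dotProduct_mulVec, Matrix.vecMul_transpose,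
        dotProduct_comm]
    have hAub : A.mulVec u + b = A.mulVec h := by
      rw [hu', Matrix.mulVec_add]
      have : A.mulVec ustar + A.mulVec h + b = (A.mulVec ustar + b) + A.mulVec h := by abel
      rw [this, hAu, zero_add]
    have hQh : 0 < h ⬝ᵥ Q.mulVec h := by
      have := hQ.dotProduct_mulVec_pos hne
      simpa using this
    have hcs : -(norm2 ystar * norm2 (A.mulVec h)) ≤ ystar ⬝ᵥ A.mulVec h := by
      have := abs_dot_le_norm2 ystar (A.mulVec h)
      have := neg_abs_le (ystar ⬝ᵥ A.mulVec h)
      linarith [abs_dot_le_norm2 ystar (A.mulVec h), neg_abs_le (ystar ⬝ᵥ A.mulVec h)]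
    have hmul : norm2 ystar * norm2 (A.mulVec h) ≤ τ * norm2 (A.mulVec h) :=
      mul_le_mul_of_nonneg_right hfeas (norm2_nonneg _)
    unfold primalObj
    rw [hAub, hAu, norm2_zero, hu', quad_expand hQsym, hcross, dotProduct_add]
    nlinarith [norm2_nonneg (A.mulVec h)]
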